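/- Mrs. Gerber's Lemma application: Let X₁ be a binary random variable, (X₂,U) discrete random variables, and Y = X₁ ⊕ W with W ~ Bern(p), p ∈ (0,1/2), W independent of (X₁, X₂, U). Then H(Y|X₂,U) ≥ h₂( h₂⁻¹(H(X₁|X₂,U)) ∗ p ), where h₂⁻¹ : [0,1] → [0,1/2] is the inverse of binary entropy restricted to [0,1/2] and ∗ is binary convolution. -/

import Mathlib

open Finset

/-- Binary convolution `a ∗ b = a(1-b) + b(1-a)`. -/
noncomputable def bconv (a b : ℝ) : ℝ := a * (1 - b) + b * (1 - a)

/-- Binary entropy (base 2), with the convention `0 · log 0 = 0`. -/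
noncomputable def h2 (x : ℝ) : ℝ := -x * Real.logb 2 x - (1 - x) * Real.logb 2 (1 - x)

/-- Inverse of binary entropy, mapping `[0,1]` to `[0,1/2]`. -/
noncomputable def h2inv (y : ℝ) : ℝ :=
  sSup {r : ℝ | r ∈ Set.Icc (0:ℝ) (1/2) ∧ h2 r ≤ y}

/-- `Bern(s)` pmf on `Bool`. -/
noncomputable def bern (s : ℝ) (b : Bool) : ℝ := if b then s else 1 - s

lemma log2_pos : (0:ℝ) < Real.log 2 := Real.log_pos (by norm_num)

lemma h2_eq (x : ℝ) : h2 x = Real.binEntropy x / Real.log 2 := by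
  simp only [h2, Real.binEntropy, Real.logb, Real.log_inv]
  field_simp
  ring

lemma h2_zero : h2 0 = 0 := by simp [h2_eq]

lemma h2_half : h2 (1/2) = 1 := by
  rw [h2_eq, show (1:ℝ)/2 = 2⁻¹ by norm_num,
    Real.binEntropy_eq_log_two.mpr rfl, div_self log2_pos.ne']

lemma h2_continuous : Continuous h2 := by
  have : h2 = fun x => Real.binEntropy x / Real.log 2 := funext h2_eq
  rw [this]; exact Real.binEntropy_continuous.div_const _

lemma h2_strictMonoOn : StrictMonoOn h2 (Set.Icc 0 (1/2)) := by
  have : (1:ℝ)/2 = 2⁻¹ := by norm_num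
  rw [this]
  intro a ha b hb hab
  rw [h2_eq, h2_eq]
  exact (div_lt_div_iff_of_pos_right log2_pos).mpr (Real.binEntropy_strictMonoOn ha hb hab)

lemma h2_symm (x : ℝ) : h2 (1 - x) = h2 x := by
  simp only [h2]; ring_nf

lemma h2_nonneg {x : ℝ} (h0 : 0 ≤ x) (h1 : x ≤ 1) : 0 ≤ h2 x := by
  rw [h2_eq]; exact div_nonneg (Real.binEntropy_nonneg h0 h1) log2_pos.le

lemma h2_le_one (x : ℝ) : h2 x ≤ 1 := by
  rw [h2_eq, div_le_one log2_pos]; exact Real.binEntropy_le_log_two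

lemma h2inv_eq {t b : ℝ} (hb : b ∈ Set.Icc (0:ℝ) (1/2)) (ht : h2 b = t) : h2inv t = b := by
  have hset : {r : ℝ | r ∈ Set.Icc (0:ℝ) (1/2) ∧ h2 r ≤ t} = Set.Icc 0 b := by
    ext r
    simp only [Set.mem_setOf_eq, Set.mem_Icc]
    constructor
    · rintro ⟨⟨hr0, hr2⟩, hrt⟩
      refine ⟨hr0, ?_⟩
      by_contra hc
      push_neg at hc
      exact absurd hrt (by rw [← ht]; exact (h2_strictMonoOn hb ⟨hr0, hr2⟩ hc).not_ge)
    · rintro ⟨hr0, hrb⟩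
      have hr2 : r ≤ 1/2 := hrb.trans hb.2
      exact ⟨⟨hr0, hr2⟩, ht ▸ h2_strictMonoOn.monotoneOn ⟨hr0, hr2⟩ hb hrb⟩
  rw [h2inv, hset, csSup_Icc hb.1]

lemma h2inv_exists {t : ℝ} (ht : t ∈ Set.Icc (0:ℝ) 1) :
    h2inv t ∈ Set.Icc (0:ℝ) (1/2) ∧ h2 (h2inv t) = t := by
  obtain ⟨b, hb, hbt⟩ : ∃ b ∈ Set.Icc (0:ℝ) (1/2), h2 b = t := by
    have := intermediate_value_Icc (by norm_num : (0:ℝ) ≤ 1/2) h2_continuous.continuousOn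
    rw [h2_zero, h2_half] at this
    exact (this ht).imp fun b hb => ⟨hb.1, hb.2⟩
  rw [h2inv_eq hb hbt]; exact ⟨hb, hbt⟩

lemma h2inv_h2 {b : ℝ} (hb : b ∈ Set.Icc (0:ℝ) (1/2)) : h2inv (h2 b) = b :=
  h2inv_eq hb rfl

open Set

noncomputable def Lf (x : ℝ) : ℝ := Real.log (1 - x) - Real.log x
noncomputable def psiF (x : ℝ) : ℝ := x * (1 - x) * Lf x

lemma Lf_nonneg {x : ℝ} (h0 : 0 < x) (h2 : x ≤ 1/2) : 0 ≤ Lf x :=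
  sub_nonneg.mpr (Real.log_le_log h0 (by linarith))

lemma Lf_pos {x : ℝ} (h0 : 0 < x) (h2 : x < 1/2) : 0 < Lf x :=
  sub_pos.mpr (Real.log_lt_log h0 (by linarith))

lemma hasDerivAt_Lf {x : ℝ} (h0 : x ≠ 0) (h1 : x ≠ 1) :
    HasDerivAt Lf (-(1/(x*(1-x)))) x := by
  have h1' : (1:ℝ) - x ≠ 0 := sub_ne_zero.mpr (Ne.symm h1)
  have d1 : HasDerivAt (fun y : ℝ => Real.log (1 - y)) (-(1/(1-x))) x := by
    have := (Real.hasDerivAt_log h1').comp x ((hasDerivAt_id x).const_sub 1)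
    simpa [div_eq_mul_inv, Function.comp_def] using this
  have d2 := Real.hasDerivAt_log h0
  have := d1.sub d2
  refine this.congr_deriv ?_
  field_simp
  ring

lemma hasDerivAt_psi {x : ℝ} (h0 : x ≠ 0) (h1 : x ≠ 1) :
    HasDerivAt psiF ((1-2*x)*Lf x - 1) x := by
  have dm : HasDerivAt (fun y : ℝ => y * (1 - y)) (1 - 2*x) x := by
    have := (hasDerivAt_id x).mul ((hasDerivAt_id x).const_sub 1)
    refine this.congr_deriv ?_
    simp only [id_eq]
    ring
  have := dm.mul (hasDerivAt_Lf h0 h1)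
  refine this.congr_deriv ?_
  have h1' : (1:ℝ) - x ≠ 0 := sub_ne_zero.mpr (Ne.symm h1)
  field_simp
  ring

lemma hasDerivAt_psi' {x : ℝ} (h0 : x ≠ 0) (h1 : x ≠ 1) :
    HasDerivAt (fun y => (1-2*y)*Lf y - 1) (-2*Lf x + (1-2*x) * (-(1/(x*(1-x))))) x := by
  have dm : HasDerivAt (fun y : ℝ => 1 - 2*y) (-2) x := by
    simpa using ((hasDerivAt_id x).const_mul 2).const_sub 1
  exact (dm.mul (hasDerivAt_Lf h0 h1)).sub_const 1

lemma psiF_half : psiF (1/2) = 0 := by norm_num [psiF, Lf]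

/-- key: `ψ(x ∗ p) ≥ (1-2p) ψ(x)` via concavity of ψ on `[x,1/2]`. -/
lemma psi_key {p x : ℝ} (hp : p ∈ Set.Ioo (0:ℝ) (1/2)) (hx : x ∈ Set.Ioo (0:ℝ) (1/2)) :
    (1-2*p) * psiF x ≤ psiF (x*(1-p) + p*(1-x)) := by
  obtain ⟨hp0, hp2⟩ := hp
  obtain ⟨hx0, hx2⟩ := hx
  have hsub : Set.Icc x (1/2) ⊆ Set.Ioo (0:ℝ) 1 := fun y hy =>
    ⟨lt_of_lt_of_le hx0 hy.1, lt_of_le_of_lt hy.2 (by norm_num)⟩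
  have hne : ∀ y ∈ Set.Ioo (0:ℝ) 1, y ≠ 0 ∧ y ≠ 1 := fun y hy => ⟨hy.1.ne', hy.2.ne⟩
  have hconc : ConcaveOn ℝ (Set.Icc x (1/2)) psiF := by
    apply concaveOn_of_deriv2_nonpos (convex_Icc _ _)
    · intro y hy
      obtain ⟨hy0, hy1⟩ := hne y (hsub hy)
      exact ((hasDerivAt_psi hy0 hy1).differentiableAt).continuousAt.continuousWithinAt
    · rw [interior_Icc]
      intro y hy
      obtain ⟨hy0, hy1⟩ := hne y (hsub (Set.Ioo_subset_Icc_self hy))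
      exact ((hasDerivAt_psi hy0 hy1).differentiableAt).differentiableWithinAt
    · rw [interior_Icc]
      intro y hy
      have hyo : y ∈ Set.Ioo (0:ℝ) 1 := hsub (Set.Ioo_subset_Icc_self hy)
      obtain ⟨hy0, hy1⟩ := hne y hyo
      have hev : deriv psiF =ᶠ[nhds y] (fun t => (1-2*t)*Lf t - 1) := by
        filter_upwards [IsOpen.mem_nhds isOpen_Ioo hyo] with t ht
        exact (hasDerivAt_psi (hne t ht).1 (hne t ht).2).deriv
      exact (hev.differentiableAt_iff.mpr (hasDerivAt_psi' hy0 hy1).differentiableAt).differentiableWithinAt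
    · rw [interior_Icc]
      intro y hy
      have hyo : y ∈ Set.Ioo (0:ℝ) 1 := hsub (Set.Ioo_subset_Icc_self hy)
      obtain ⟨hy0, hy1⟩ := hne y hyo
      have hev : deriv psiF =ᶠ[nhds y] (fun t => (1-2*t)*Lf t - 1) := by
        filter_upwards [IsOpen.mem_nhds isOpen_Ioo hyo] with t ht
        exact (hasDerivAt_psi (hne t ht).1 (hne t ht).2).deriv
      have : deriv (deriv psiF) y = -2*Lf y + (1-2*y) * (-(1/(y*(1-y)))) := by
        rw [hev.deriv_eq]
        exact (hasDerivAt_psi' hy0 hy1).deriv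
      show deriv^[2] psiF y ≤ 0
      rw [Function.iterate_succ, Function.iterate_one, Function.comp_apply, this]
      have hy2 : y < 1/2 := hy.2
      have hL : 0 ≤ Lf y := Lf_nonneg hyo.1 hy2.le
      have h12 : 0 ≤ 1 - 2*y := by linarith
      have hprod : 0 < y * (1-y) := mul_pos hyo.1 (by linarith)
      have : 0 ≤ (1-2*y) * (1/(y*(1-y))) := mul_nonneg h12 (by positivity)
      nlinarith
  have hmem1 : x ∈ Set.Icc x (1/2) := ⟨le_refl x, hx2.le⟩
  have hmem2 : (1/2 : ℝ) ∈ Set.Icc x (1/2) := ⟨hx2.le, le_refl _⟩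
  have := hconc.2 hmem1 hmem2 (by linarith : (0:ℝ) ≤ 1-2*p) (by linarith : (0:ℝ) ≤ 2*p)
    (by ring)
  rw [psiF_half] at this
  simp only [smul_eq_mul, mul_zero, add_zero] at this
  convert this using 2
  · rfl
  ring


lemma bconv_affine (x p : ℝ) : bconv x p = (1-2*p)*x + p := by unfold bconv; ring

lemma bconv_mem {p x : ℝ} (hp : p ∈ Set.Ioo (0:ℝ) (1/2)) (hx : x ∈ Set.Ioo (0:ℝ) (1/2)) :
    bconv x p ∈ Set.Ioo (0:ℝ) (1/2) := by
  rw [bconv_affine]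
  obtain ⟨hp0, hp2⟩ := hp; obtain ⟨hx0, hx2⟩ := hx
  constructor
  · nlinarith
  · nlinarith

lemma hasDerivAt_bconv (p x : ℝ) : HasDerivAt (fun y => bconv y p) (1-2*p) x := by
  have : (fun y => bconv y p) = fun y => (1-2*p)*y + p := by
    funext y; rw [bconv_affine]
  rw [this]
  simpa using ((hasDerivAt_id x).const_mul (1-2*p)).add_const p

lemma ratio_mono {p : ℝ} (hp : p ∈ Set.Ioo (0:ℝ) (1/2)) :
    MonotoneOn (fun b => Lf (bconv b p) / Lf b) (Set.Ioo (0:ℝ) (1/2)) := by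
  obtain ⟨hp0, hp2⟩ := hp
  have hd : ∀ b ∈ Set.Ioo (0:ℝ) (1/2), HasDerivAt (fun b => Lf (bconv b p) / Lf b)
      (((-(1/((bconv b p)*(1-(bconv b p)))) * (1-2*p)) * Lf b -
        Lf (bconv b p) * (-(1/(b*(1-b))))) / (Lf b)^2) b := by
    intro b hb
    have hc := bconv_mem ⟨hp0, hp2⟩ hb
    have hLb : Lf b ≠ 0 := (Lf_pos hb.1 hb.2).ne'
    have dnum : HasDerivAt (fun y => Lf (bconv y p)) (-(1/((bconv b p)*(1-(bconv b p)))) * (1-2*p)) b :=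
      HasDerivAt.comp (h₂ := Lf) b (hasDerivAt_Lf hc.1.ne' (by linarith [hc.2] : bconv b p ≠ 1)) (hasDerivAt_bconv p b)
    exact dnum.div (hasDerivAt_Lf hb.1.ne' (by linarith [hb.2] : b ≠ 1)) hLb
  apply monotoneOn_of_deriv_nonneg (convex_Ioo _ _)
  · exact fun b hb => ((hd b hb).differentiableAt).continuousAt.continuousWithinAt
  · rw [interior_Ioo]
    exact fun b hb => ((hd b hb).differentiableAt).differentiableWithinAt
  · rw [interior_Ioo]
    intro b hb
    rw [(hd b hb).deriv]
    have hc := bconv_mem ⟨hp0, hp2⟩ hb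
    have hb1 : 0 < b * (1-b) := mul_pos hb.1 (by linarith [hb.2])
    have hc1 : 0 < (bconv b p) * (1-(bconv b p)) := mul_pos hc.1 (by linarith [hc.2])
    apply div_nonneg _ (sq_nonneg _)
    have hkey := psi_key ⟨hp0, hp2⟩ hb
    rw [show b*(1-p) + p*(1-b) = bconv b p from rfl] at hkey
    have hid : (-(1/((bconv b p)*(1-(bconv b p)))) * (1-2*p)) * Lf b -
        Lf (bconv b p) * (-(1/(b*(1-b)))) =
        (psiF (bconv b p) - (1-2*p) * psiF b) / ((b*(1-b)) * ((bconv b p)*(1-(bconv b p)))) := by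
      unfold psiF
      have hb0 : b ≠ 0 := hb.1.ne'
      have hb1' : 1 - b ≠ 0 := by linarith [hb.2]
      have hc0 : bconv b p ≠ 0 := hc.1.ne'
      have hc1' : 1 - bconv b p ≠ 0 := by linarith [hc.2]
      field_simp
      ring
    rw [hid]
    apply div_nonneg (by linarith) (by positivity)

/-- The Mrs. Gerber function `F` is convex on `[0,1]`. -/
lemma mgl_convex {p : ℝ} (hp : p ∈ Set.Ioo (0:ℝ) (1/2)) :
    ConvexOn ℝ (Set.Icc (0:ℝ) 1) (fun t => h2 (bconv (h2inv t) p)) := by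
  obtain ⟨hp0, hp2⟩ := hp
  set g : ℝ → ℝ := fun b => h2 (bconv b p) with hg
  -- derivative facts for g and h2 on Ioo 0 (1/2)
  have hgd : ∀ ξ ∈ Set.Ioo (0:ℝ) (1/2),
      HasDerivAt g (Lf (bconv ξ p) / Real.log 2 * (1-2*p)) ξ := by
    intro ξ hξ
    have hc := bconv_mem ⟨hp0, hp2⟩ hξ
    have dh2 : HasDerivAt h2 (Lf (bconv ξ p) / Real.log 2) (bconv ξ p) := by
      have hf : h2 = fun x => Real.binEntropy x / Real.log 2 := funext h2_eq
      rw [hf]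
      exact (Real.hasDerivAt_binEntropy hc.1.ne' (by linarith [hc.2])).div_const _
    exact dh2.comp ξ (hasDerivAt_bconv p ξ)
  have hhd : ∀ ξ ∈ Set.Ioo (0:ℝ) (1/2), HasDerivAt h2 (Lf ξ / Real.log 2) ξ := by
    intro ξ hξ
    have hf : h2 = fun x => Real.binEntropy x / Real.log 2 := funext h2_eq
    rw [hf]
    exact (Real.hasDerivAt_binEntropy hξ.1.ne' (by linarith [hξ.2])).div_const _
  have hgc : Continuous g := h2_continuous.comp (by
    have : (fun b => bconv b p) = fun b => (1-2*p)*b + p := by funext b; rw [bconv_affine]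
    rw [this]; continuity)
  -- the MVT-derived slope formula on [a,b] ⊆ [0,1/2]
  have slope : ∀ a b : ℝ, 0 ≤ a → a < b → b ≤ 1/2 →
      ∃ ξ ∈ Set.Ioo a b, (h2 b - h2 a) * (Lf (bconv ξ p) / Real.log 2 * (1-2*p)) =
        (g b - g a) * (Lf ξ / Real.log 2) := by
    intro a b ha hab hb2
    have hsub : Set.Ioo a b ⊆ Set.Ioo (0:ℝ) (1/2) := fun ξ hξ =>
      ⟨lt_of_le_of_lt ha hξ.1, lt_of_lt_of_le hξ.2 hb2⟩
    exact exists_ratio_hasDerivAt_eq_ratio_slope g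
      (fun ξ => Lf (bconv ξ p) / Real.log 2 * (1-2*p)) hab
      hgc.continuousOn (fun ξ hξ => hgd ξ (hsub hξ)) h2
      (fun ξ => Lf ξ / Real.log 2) h2_continuous.continuousOn
      (fun ξ hξ => hhd ξ (hsub hξ))
  apply convexOn_of_slope_mono_adjacent (convex_Icc _ _)
  intro x y z hx hz hxy hyz
  have hy : y ∈ Set.Icc (0:ℝ) 1 := ⟨hx.1.trans hxy.le, hyz.le.trans hz.2⟩
  obtain ⟨hb1m, hb1⟩ := h2inv_exists hx
  obtain ⟨hb2m, hb2⟩ := h2inv_exists hy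
  obtain ⟨hb3m, hb3⟩ := h2inv_exists hz
  set b₁ := h2inv x; set b₂ := h2inv y; set b₃ := h2inv z
  have hb12 : b₁ < b₂ := by
    by_contra hcon
    push_neg at hcon
    exact absurd (hb2 ▸ hb1 ▸ h2_strictMonoOn.monotoneOn hb2m hb1m hcon) hxy.not_ge
  have hb23 : b₂ < b₃ := by
    by_contra hcon
    push_neg at hcon
    exact absurd (hb3 ▸ hb2 ▸ h2_strictMonoOn.monotoneOn hb3m hb2m hcon) hyz.not_ge
  obtain ⟨ξ₁, hξ₁, heq₁⟩ := slope b₁ b₂ hb1m.1 hb12 hb2m.2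
  obtain ⟨ξ₂, hξ₂, heq₂⟩ := slope b₂ b₃ hb2m.1 hb23 hb3m.2
  have hξ₁m : ξ₁ ∈ Set.Ioo (0:ℝ) (1/2) := ⟨lt_of_le_of_lt hb1m.1 hξ₁.1, lt_of_lt_of_le hξ₁.2 hb2m.2⟩
  have hξ₂m : ξ₂ ∈ Set.Ioo (0:ℝ) (1/2) := ⟨lt_of_le_of_lt hb2m.1 hξ₂.1, lt_of_lt_of_le hξ₂.2 hb3m.2⟩
  have hL1 : 0 < Lf ξ₁ := Lf_pos hξ₁m.1 hξ₁m.2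
  have hL2 : 0 < Lf ξ₂ := Lf_pos hξ₂m.1 hξ₂m.2
  rw [hb1, hb2] at heq₁
  rw [hb2, hb3] at heq₂
  -- slopes
  have hlog : Real.log 2 ≠ 0 := log2_pos.ne'
  have hne1 : Lf ξ₁ ≠ 0 := hL1.ne'
  have hne2 : Lf ξ₂ ≠ 0 := hL2.ne'
  have hs1 : (g b₂ - g b₁) / (y - x) = (1-2*p) * (Lf (bconv ξ₁ p) / Lf ξ₁) := by
    rw [div_eq_iff (by linarith : y - x ≠ 0)]
    field_simp at heq₁ ⊢
    linear_combination -heq₁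
  have hs2 : (g b₃ - g b₂) / (z - y) = (1-2*p) * (Lf (bconv ξ₂ p) / Lf ξ₂) := by
    rw [div_eq_iff (by linarith : z - y ≠ 0)]
    field_simp at heq₂ ⊢
    linear_combination -heq₂
  show (g b₂ - g b₁) / (y - x) ≤ (g b₃ - g b₂) / (z - y)
  rw [hs1, hs2]
  apply mul_le_mul_of_nonneg_left _ (by linarith : (0:ℝ) ≤ 1-2*p)
  exact ratio_mono ⟨hp0, hp2⟩ hξ₁m hξ₂m (by linarith [hξ₁.2, hξ₂.1])

lemma h2_min (a : ℝ) : h2 (min a (1-a)) = h2 a := by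
  rcases le_total a (1-a) with h|h
  · rw [min_eq_left h]
  · rw [min_eq_right h, h2_symm]

lemma h2_bconv_min (a q : ℝ) : h2 (bconv (min a (1-a)) q) = h2 (bconv a q) := by
  rcases le_total a (1-a) with h|h
  · rw [min_eq_left h]
  · rw [min_eq_right h]
    have : bconv (1-a) q = 1 - bconv a q := by unfold bconv; ring
    rw [this, h2_symm]

lemma ent_pair (q1 q0 : ℝ) (hq1 : 0 ≤ q1) (hq0 : 0 ≤ q0) :
    -(q1 * Real.logb 2 (q1/(q1+q0)) + q0 * Real.logb 2 (q0/(q1+q0))) =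
    (q1+q0) * h2 (q1/(q1+q0)) := by
  rcases eq_or_lt_of_le (by linarith : (0:ℝ) ≤ q1 + q0) with hm | hm
  · have hz1 : q1 = 0 := by linarith
    have hz0 : q0 = 0 := by linarith
    simp [hz1, hz0, h2_zero]
  · have hmne : q1 + q0 ≠ 0 := hm.ne'
    have hone : 1 - q1/(q1+q0) = q0/(q1+q0) := by field_simp; ring
    rw [h2, hone]
    field_simp
    ring

/-- Mrs. Gerber's Lemma application: with `X₁` binary, `(X₂,U)` discrete
with finite alphabet `S`, and `Y = X₁ ⊕ W`, `W ~ Bern(p)` independent of `(X₁,X₂,U)`,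
one has `H(Y|X₂,U) ≥ h₂( h₂⁻¹(H(X₁|X₂,U)) ∗ p )`. -/
theorem stmt16 {S : Type*} [Fintype S] (p : ℝ) (hp : p ∈ Set.Ioo (0:ℝ) (1/2))
    (Q : Bool → S → ℝ)  -- joint pmf of (X₁,(X₂,U))
    (h0 : ∀ x1 s, 0 ≤ Q x1 s) (h1 : ∑ x1, ∑ s, Q x1 s = 1) :
    -(∑ s, ∑ y : Bool, (∑ x1, Q x1 s * bern p (xor x1 y)) *
        Real.logb 2 ((∑ x1, Q x1 s * bern p (xor x1 y)) / (∑ x1, Q x1 s))) ≥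
      h2 (bconv
        (h2inv (-(∑ s, ∑ x1, Q x1 s * Real.logb 2 (Q x1 s / (∑ x1', Q x1' s)))))
        p) := by
  obtain ⟨hp0, hp2⟩ := hp
  set m : S → ℝ := fun s => Q true s + Q false s with hmdef
  have hm0 : ∀ s, 0 ≤ m s := fun s => add_nonneg (h0 true s) (h0 false s)
  have hmQ : ∀ s, Q true s ≤ m s := fun s => le_add_of_nonneg_right (h0 false s)
  set α : S → ℝ := fun s => Q true s / m s with hαdef
  set β : S → ℝ := fun s => min (α s) (1 - α s) with hβdef
  have hα01 : ∀ s, 0 ≤ α s ∧ α s ≤ 1 := by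
    intro s
    constructor
    · exact div_nonneg (h0 true s) (hm0 s)
    · rcases eq_or_lt_of_le (hm0 s) with h|h
      · simp only [hαdef, ← h, div_zero]; norm_num
      · exact (div_le_one h).mpr (hmQ s)
  have hβmem : ∀ s, β s ∈ Set.Icc (0:ℝ) (1/2) := by
    intro s
    obtain ⟨ha0, ha1⟩ := hα01 s
    constructor
    · exact le_min ha0 (by linarith)
    · rcases le_total (α s) (1 - α s) with h|h
      · rw [hβdef]; simp only [min_eq_left h]; linarith
      · rw [hβdef]; simp only [min_eq_right h]; linarith
  have hmsum : ∑ s, m s = 1 := by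
    rw [← h1, Finset.sum_comm]
    exact Finset.sum_congr rfl fun s _ => by
      rw [Fintype.sum_bool]
  -- the marginal sum in the statement equals m s
  have hmarg : ∀ s, (∑ x1, Q x1 s) = m s := fun s => by rw [Fintype.sum_bool]
  -- Step 2 : the conditional entropy of X₁
  have key2 : (-(∑ s, ∑ x1, Q x1 s * Real.logb 2 (Q x1 s / (∑ x1', Q x1' s)))) =
      ∑ s, m s * h2 (β s) := by
    rw [← Finset.sum_neg_distrib]
    refine Finset.sum_congr rfl fun s _ => ?_
    rw [Fintype.sum_bool, hmarg s]
    have := ent_pair (Q true s) (Q false s) (h0 true s) (h0 false s)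
    rw [show Q true s + Q false s = m s from rfl] at this
    rw [this]
    congr 1
    rw [hβdef, hαdef]
    exact (h2_min _).symm
  -- Step 1 : the conditional entropy of Y
  have key1 : (-(∑ s, ∑ y : Bool, (∑ x1, Q x1 s * bern p (xor x1 y)) *
      Real.logb 2 ((∑ x1, Q x1 s * bern p (xor x1 y)) / (∑ x1, Q x1 s)))) =
      ∑ s, m s * h2 (bconv (β s) p) := by
    rw [← Finset.sum_neg_distrib]
    refine Finset.sum_congr rfl fun s _ => ?_
    have hxor : ∀ y : Bool, (∑ x1, Q x1 s * bern p (xor x1 y)) =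
        Q true s * bern p (xor true y) + Q false s * bern p (xor false y) := fun y => by
      rw [Fintype.sum_bool]
    simp only [Fintype.sum_bool, hxor, hmarg s]
    have hbt : bern p true = p := rfl
    have hbf : bern p false = 1 - p := rfl
    simp only [Bool.xor_true, Bool.xor_false, Bool.not_true, Bool.not_false, hbt, hbf]
    -- now terms: y = true : Q true * bern p (!true)=... careful
    set u := Q true s * (1-p) + Q false s * p with hu
    set v := Q true s * p + Q false s * (1-p) with hv
    have hu0 : 0 ≤ u := add_nonneg (mul_nonneg (h0 true s) (by linarith)) (mul_nonneg (h0 false s) (by linarith))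
    have hv0 : 0 ≤ v := add_nonneg (mul_nonneg (h0 true s) (by linarith)) (mul_nonneg (h0 false s) (by linarith))
    have huv : u + v = m s := by rw [hu, hv, hmdef]; ring
    have hep := ent_pair u v hu0 hv0
    rw [huv] at hep
    rw [hep]
    rcases eq_or_lt_of_le (hm0 s) with h|h
    · rw [← h, zero_mul, zero_mul]
    · have hαu : u / m s = bconv (α s) p := by
        have hmne : m s ≠ 0 := h.ne'
        rw [hu, hαdef, bconv]
        have h1α : 1 - Q true s / m s = Q false s / m s := by
          rw [eq_div_iff hmne, sub_mul, div_mul_cancel₀ _ hmne, hmdef]; ring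
        rw [h1α]
        field_simp
      rw [hαu, ← h2_bconv_min (α s) p]
  rw [key1, key2]
  -- Jensen
  have hmem : ∀ s ∈ Finset.univ (α := S), h2 (β s) ∈ Set.Icc (0:ℝ) 1 := by
    intro s _
    obtain ⟨hb0, hb2⟩ := hβmem s
    exact ⟨h2_nonneg hb0 (by linarith), h2_le_one _⟩
  have jensen := (mgl_convex ⟨hp0, hp2⟩).map_sum_le (fun s _ => hm0 s)
    hmsum hmem
  simp only [smul_eq_mul] at jensen
  refine le_trans ?_ (le_trans jensen ?_)
  · exact le_of_eq rfl
  · apply le_of_eq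
    refine Finset.sum_congr rfl fun s _ => ?_
    rw [h2inv_h2 (hβmem s)]
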